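/- arXiv:2111.08304 — 3 statements merged into one kernel-verified Lean document; each statement's English description precedes it below -/
import Mathlib

section
/- Let α, β, γ > 0 with α + β + γ < 2, t > 1, and R(x) = x - 2/f(x) where f(x) = α/x + β/(x-1) + γ/(x-t). Then R'(x) < 0 for every real x with f(x) ≠ 0 and x ∉ {0,1,t}. -/
theorem R_deriv_neg
    (α β γ t : ℝ) (hα : 0 < α) (hβ : 0 < β) (hγ : 0 < γ)
    (hsum : α + β + γ < 2) (ht : 1 < t)
    (x : ℝ) (hx0 : x ≠ 0) (hx1 : x ≠ 1) (hxt : x ≠ t)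
    (hf : α / x + β / (x - 1) + γ / (x - t) ≠ 0) :
    deriv (fun y : ℝ => y - 2 / (α / y + β / (y - 1) + γ / (y - t))) x < 0 := by
  have hx1' : x - 1 ≠ 0 := sub_ne_zero.mpr hx1
  have hxt' : x - t ≠ 0 := sub_ne_zero.mpr hxt
  set u : ℝ := x⁻¹ with hu
  set v : ℝ := (x - 1)⁻¹ with hv
  set w : ℝ := (x - t)⁻¹ with hw
  -- derivative of f
  have h1 : HasDerivAt (fun y : ℝ => α / y) (α * (-(x ^ 2)⁻¹)) x := by
    simpa [div_eq_mul_inv] using (hasDerivAt_inv hx0).const_mul α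
  have h2 : HasDerivAt (fun y : ℝ => β / (y - 1)) (β * (-((x - 1) ^ 2)⁻¹)) x := by
    have : HasDerivAt (fun y : ℝ => (y - 1)⁻¹) (-((x - 1) ^ 2)⁻¹ * 1) x :=
      (hasDerivAt_inv hx1').comp x ((hasDerivAt_id x).sub_const 1)
    simpa [div_eq_mul_inv] using this.const_mul β
  have h3 : HasDerivAt (fun y : ℝ => γ / (y - t)) (γ * (-((x - t) ^ 2)⁻¹)) x := by
    have : HasDerivAt (fun y : ℝ => (y - t)⁻¹) (-((x - t) ^ 2)⁻¹ * 1) x :=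
      (hasDerivAt_inv hxt').comp x ((hasDerivAt_id x).sub_const t)
    simpa [div_eq_mul_inv] using this.const_mul γ
  have hF : HasDerivAt (fun y : ℝ => α / y + β / (y - 1) + γ / (y - t))
      (α * (-(x ^ 2)⁻¹) + β * (-((x - 1) ^ 2)⁻¹) + γ * (-((x - t) ^ 2)⁻¹)) x :=
    (h1.add h2).add h3
  set F : ℝ := α / x + β / (x - 1) + γ / (x - t) with hFdef
  set F' : ℝ := α * (-(x ^ 2)⁻¹) + β * (-((x - 1) ^ 2)⁻¹) + γ * (-((x - t) ^ 2)⁻¹) with hF'def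
  have hinv : HasDerivAt (fun y : ℝ => 2 / (α / y + β / (y - 1) + γ / (y - t)))
      (2 * (-F' / F ^ 2)) x := by
    simpa [div_eq_mul_inv, hFdef] using (hF.inv hf).const_mul 2
  have hR : HasDerivAt (fun y : ℝ => y - 2 / (α / y + β / (y - 1) + γ / (y - t)))
      (1 - 2 * (-F' / F ^ 2)) x := (hasDerivAt_id x).sub hinv
  rw [hR.deriv]
  -- now the inequality
  have hFsq : 0 < F ^ 2 := by positivity
  have hu2 : (x ^ 2)⁻¹ = u ^ 2 := by rw [hu]; field_simp
  have hv2 : ((x - 1) ^ 2)⁻¹ = v ^ 2 := by rw [hv]; field_simp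
  have hw2 : ((x - t) ^ 2)⁻¹ = w ^ 2 := by rw [hw]; field_simp
  have hFu : F = α * u + β * v + γ * w := by
    rw [hFdef, hu, hv, hw]; ring
  have hF' : F' = -(α * u ^ 2 + β * v ^ 2 + γ * w ^ 2) := by
    rw [hF'def, hu2, hv2, hw2]; ring
  have hupos : 0 < u ^ 2 := by positivity
  have hvpos : 0 < v ^ 2 := by positivity
  have hwpos : 0 < w ^ 2 := by positivity
  have hspos : 0 < α * u ^ 2 + β * v ^ 2 + γ * w ^ 2 := by positivity
  have key : F ^ 2 < 2 * (α * u ^ 2 + β * v ^ 2 + γ * w ^ 2) := by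
    rw [hFu]
    nlinarith [mul_nonneg (mul_pos hα hβ).le (sq_nonneg (u - v)),
      mul_nonneg (mul_pos hα hγ).le (sq_nonneg (u - w)),
      mul_nonneg (mul_pos hβ hγ).le (sq_nonneg (v - w)),
      mul_pos (by linarith : (0:ℝ) < 2 - (α + β + γ)) hspos]
  have : 1 < 2 * (-F') / F ^ 2 := by
    rw [lt_div_iff₀ hFsq, hF']
    linarith [key]
  have h2' : 2 * (-F' / F ^ 2) = 2 * (-F') / F ^ 2 := by ring
  linarith [this, h2'.ge]
end

section
/- If z₀ = x₀ + iy₀ with y₀ > 0 satisfies α/z₀ + β/(z₀-1) + γ/(z₀-t) = 1/(iy₀), where α,β,γ > 0, E := α+β+γ-1 with E < 1, and t > 1, then |z₀|² = ρ(x₀) where ρ(x) = αtx / ((1-E)x + E(t+1) - γt - β), provided the denominator is nonzero. -/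
open Complex in
theorem normSq_eq_rho
    (α β γ t : ℝ) (hα : 0 < α) (hβ : 0 < β) (hγ : 0 < γ)
    (hE : α + β + γ - 1 < 1) (ht : 1 < t)
    (z₀ : ℂ) (hy : 0 < z₀.im)
    (heq : (α : ℂ) / z₀ + (β : ℂ) / (z₀ - 1) + (γ : ℂ) / (z₀ - t)
        = 1 / (I * (z₀.im : ℂ)))
    (hden : (1 - (α + β + γ - 1)) * z₀.re + (α + β + γ - 1) * (t + 1)
        - γ * t - β ≠ 0) :
    ‖z₀‖ ^ 2 =
      α * t * z₀.re /
        ((1 - (α + β + γ - 1)) * z₀.re + (α + β + γ - 1) * (t + 1)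
          - γ * t - β) := by
  have hy0 : z₀.im ≠ 0 := ne_of_gt hy
  have hz : z₀ ≠ 0 := fun h => hy0 (by simp [h])
  have hz1 : z₀ - 1 ≠ 0 := fun h => hy0 (by
    have : z₀ = 1 := by linear_combination h
    simp [this])
  have hzt : z₀ - (t:ℂ) ≠ 0 := fun h => hy0 (by
    have : z₀ = (t:ℂ) := by linear_combination h
    simp [this])
  have hyc : (z₀.im : ℂ) ≠ 0 := by exact_mod_cast Complex.ofReal_ne_zero.mpr hy0
  have key : (α:ℂ) * (z₀-1) * (z₀-t) * (I * z₀.im) + (β:ℂ) * z₀ * (z₀-t) * (I * z₀.im)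
      + (γ:ℂ) * z₀ * (z₀-1) * (I * z₀.im) = z₀ * (z₀-1) * (z₀-t) := by
    field_simp at heq
    linear_combination heq
  set x := z₀.re with hx
  set y := z₀.im with hyy
  have hz' : z₀ = (x:ℂ) + (y:ℂ)*I := (re_add_im z₀).symm
  rw [hz'] at key
  simp only [Complex.ext_iff, Complex.add_re, Complex.add_im, Complex.sub_re, Complex.sub_im,
    Complex.mul_re, Complex.mul_im, Complex.ofReal_re, Complex.ofReal_im, Complex.I_re,
    Complex.I_im, Complex.one_re, Complex.one_im] at key
  obtain ⟨h1, h2⟩ := key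
  rw [Complex.sq_norm, Complex.normSq_apply, eq_div_iff hden]
  apply mul_left_cancel₀ hy0
  ring_nf
  ring_nf at h1 h2
  linear_combination y * h1 - x * h2
end

section
/- For a > 0, Re a > 0 and Re(c - a) > 0 and real z < 1, the integral ∫₀¹ t^{a-1}(1-t)^{c-a-1}(1-tz)^{-b} dt equals B(a, c-a)·₂F₁(a, b; c; z), where ₂F₁ is the Gaussian hypergeometric series and B is the Euler Beta function, provided additionally |z| < 1 so the series converges. -/
/-- Pochhammer symbol `(q)ₙ`. -/
noncomputable def poch (q : ℝ) (n : ℕ) : ℝ := (ascPochhammer ℝ n).eval q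

/-- Gaussian hypergeometric series `₂F₁(a,b;c;z)`. -/
noncomputable def hyp2F1 (a b c z : ℝ) : ℝ :=
  ∑' n : ℕ, poch a n * poch b n / (poch c n * n.factorial) * z ^ n

/-- Euler Beta function. -/
noncomputable def eulerBeta (x y : ℝ) : ℝ :=
  Real.Gamma x * Real.Gamma y / Real.Gamma (x + y)

open Filter Topology MeasureTheory intervalIntegral Real

lemma poch_zero (q : ℝ) : poch q 0 = 1 := by simp [poch]

lemma poch_succ (q : ℝ) (n : ℕ) : poch q (n + 1) = poch q n * (q + n) := by
  simp [poch, ascPochhammer_succ_eval]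

lemma poch_pos {q : ℝ} (hq : 0 < q) (n : ℕ) : 0 < poch q n := by
  induction n with
  | zero => simp [poch_zero]
  | succ n ih => rw [poch_succ]; positivity

lemma abs_poch_le {q B : ℝ} (hB0 : 0 < B) (hB : |q| ≤ B) (n : ℕ) : |poch q n| ≤ poch B n := by
  induction n with
  | zero => simp [poch_zero]
  | succ n ih =>
    rw [poch_succ, poch_succ, abs_mul]
    have h1 : |q + n| ≤ B + n := by
      calc |q + n| ≤ |q| + n := by simpa using abs_add_le q n
      _ ≤ B + n := by linarith
    have h2 : (0:ℝ) ≤ B + n := le_trans (abs_nonneg _) h1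
    exact mul_le_mul ih h1 (abs_nonneg _) (poch_pos hB0 n).le

lemma summable_master {A B C r : ℝ} (hA : 0 < A) (hB : 0 < B) (hC : 0 < C)
    (hr0 : 0 < r) (hr1 : r < 1) :
    Summable fun n : ℕ => poch A n * poch B n / (poch C n * n.factorial) * r ^ n := by
  set f : ℕ → ℝ := fun n => poch A n * poch B n / (poch C n * n.factorial) * r ^ n with hf
  have hpos : ∀ n, 0 < f n := by
    intro n
    have := poch_pos hA n; have := poch_pos hB n; have := poch_pos hC n
    have : (0:ℝ) < n.factorial := by positivity
    positivity
  apply summable_of_ratio_test_tendsto_lt_one hr1 (Eventually.of_forall fun n => (hpos n).ne')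
  have key : ∀ n : ℕ, ‖f (n+1)‖ / ‖f n‖ = ((A+n)/(n+1)) * ((B+n)/(C+n)) * r := by
    intro n
    rw [Real.norm_of_nonneg (hpos _).le, Real.norm_of_nonneg (hpos _).le, hf]
    have hfa := (poch_pos hA n).ne'
    have hfb := (poch_pos hB n).ne'
    have hfc := (poch_pos hC n).ne'
    have hfc' : (0:ℝ) < C + n := by positivity
    have hn1 : (0:ℝ) < (n:ℝ) + 1 := by positivity
    have hfact : ((n.factorial : ℝ)) ≠ 0 := by positivity
    simp only [poch_succ, Nat.factorial_succ, pow_succ, Nat.cast_mul, Nat.cast_add, Nat.cast_one]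
    field_simp
  rw [show (𝓝 r) = 𝓝 ((1 : ℝ) * 1 * r) by ring_nf]
  refine Tendsto.congr (fun n => (key n).symm) (Tendsto.mul_const r (Tendsto.mul ?_ ?_))
  · have h1 : Tendsto (fun n : ℕ => (A - 1)/((n:ℝ)+1)) atTop (𝓝 0) :=
      Tendsto.div_atTop tendsto_const_nhds (tendsto_atTop_add_const_right _ 1 tendsto_natCast_atTop_atTop)
    have : Tendsto (fun n : ℕ => 1 + (A - 1)/((n:ℝ)+1)) atTop (𝓝 (1 + 0)) :=
      tendsto_const_nhds.add h1
    refine Tendsto.congr (fun n => ?_) (by simpa using this)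
    have : ((n:ℝ)+1) ≠ 0 := by positivity
    field_simp
    ring
  · have h1 : Tendsto (fun n : ℕ => (B - C)/(C + (n:ℝ))) atTop (𝓝 0) :=
      Tendsto.div_atTop tendsto_const_nhds (tendsto_atTop_add_const_left _ C tendsto_natCast_atTop_atTop)
    have : Tendsto (fun n : ℕ => 1 + (B - C)/(C+(n:ℝ))) atTop (𝓝 (1 + 0)) :=
      tendsto_const_nhds.add h1
    refine Tendsto.congr (fun n => ?_) (by simpa using this)
    have : C + (n:ℝ) ≠ 0 := by positivity
    field_simp
    ring

lemma poch_one (n : ℕ) : poch 1 n = n.factorial := by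
  induction n with
  | zero => simp [poch_zero]
  | succ n ih => rw [poch_succ, ih, Nat.factorial_succ]; push_cast; ring

lemma poch_add_one (B : ℝ) (n : ℕ) : poch B (n + 1) = B * poch (B + 1) n := by
  induction n with
  | zero => simp [poch_zero, poch_succ]
  | succ n ih => rw [poch_succ, ih, poch_succ]; push_cast; ring

lemma summable_shift {B r : ℝ} (hB : 0 < B) (hr0 : 0 < r) (hr1 : r < 1) :
    Summable fun n : ℕ => poch B (n + 1) / n.factorial * r ^ n := by
  have h := (summable_master (A := B + 1) (B := 1) (C := 1) (by linarith) one_pos one_pos hr0 hr1).mul_left B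
  refine h.congr fun n => ?_
  rw [poch_add_one, poch_one]
  have : ((n.factorial : ℝ)) ≠ 0 := by positivity
  field_simp

lemma master_simple {B r : ℝ} (hB : 0 < B) (hr0 : 0 < r) (hr1 : r < 1) :
    Summable fun n : ℕ => poch B n / n.factorial * r ^ n := by
  refine (summable_master (A := B) (B := 1) (C := 1) hB one_pos one_pos hr0 hr1).congr fun n => ?_
  rw [poch_one]
  have : ((n.factorial : ℝ)) ≠ 0 := by positivity
  field_simp

lemma summable_bin {b x : ℝ} (hx : |x| < 1) :
    Summable fun n : ℕ => poch b n / n.factorial * x ^ n := by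
  set r := (|x| + 1) / 2 with hr
  have hx0 : 0 ≤ |x| := abs_nonneg x
  have hr0 : 0 < r := by rw [hr]; linarith
  have hr1 : r < 1 := by rw [hr]; linarith
  have hxr : |x| ≤ r := by rw [hr]; linarith
  have hB : (0:ℝ) < |b| + 1 := by positivity
  have hs := master_simple hB hr0 hr1
  refine Summable.of_norm (hs.of_nonneg_of_le (fun n => norm_nonneg _) fun n => ?_)
  rw [norm_mul, norm_div, norm_pow, Real.norm_natCast, Real.norm_eq_abs, Real.norm_eq_abs]
  have h1 : |poch b n| ≤ poch (|b| + 1) n := abs_poch_le hB (by linarith) n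
  have h2 : |x| ^ n ≤ r ^ n := pow_le_pow_left₀ hx0 hxr n
  have h3 : (0:ℝ) < n.factorial := by positivity
  have h4 : (0:ℝ) ≤ |poch b n| / n.factorial := by positivity
  have h5 : (0:ℝ) ≤ poch (|b|+1) n / n.factorial := by
    have := (poch_pos hB n).le; positivity
  calc |poch b n| / n.factorial * |x| ^ n
      ≤ poch (|b|+1) n / n.factorial * r ^ n := by
        apply mul_le_mul (by gcongr) h2 (by positivity) h5
    _ = _ := rfl

lemma summable_binD {b y : ℝ} (hy : |y| < 1) :
    Summable fun n : ℕ => poch b (n + 1) / n.factorial * y ^ n := by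
  set r := (|y| + 1) / 2 with hr
  have hy0 : 0 ≤ |y| := abs_nonneg y
  have hr0 : 0 < r := by rw [hr]; linarith
  have hr1 : r < 1 := by rw [hr]; linarith
  have hyr : |y| ≤ r := by rw [hr]; linarith
  have hB : (0:ℝ) < |b| + 1 := by positivity
  refine Summable.of_norm ((summable_shift hB hr0 hr1).of_nonneg_of_le
    (fun n => norm_nonneg _) fun n => ?_)
  rw [norm_mul, norm_div, Real.norm_natCast, Real.norm_eq_abs, norm_pow, Real.norm_eq_abs]
  have h1 : |poch b (n+1)| ≤ poch (|b|+1) (n+1) := abs_poch_le hB (by linarith) _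
  have h2 : |y| ^ n ≤ r ^ n := pow_le_pow_left₀ (abs_nonneg y) hyr n
  apply mul_le_mul (by gcongr) h2 (by positivity)
  have := (poch_pos hB (n+1)).le; positivity

/-- The binomial series. -/
lemma binomial_series {b x : ℝ} (hx : |x| < 1) :
    (∑' n : ℕ, poch b n / n.factorial * x ^ n) = (1 - x) ^ (-b) := by
  set F : ℝ → ℝ := fun y => ∑' n : ℕ, poch b n / n.factorial * y ^ n with hF
  set D : ℝ → ℝ := fun y => ∑' n : ℕ, poch b (n + 1) / n.factorial * y ^ n with hD
  -- derivative of F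
  have hderiv : ∀ y : ℝ, |y| < 1 → HasDerivAt F (D y) y := by
    intro y hy
    set r := (|y| + 1) / 2 with hr
    have hy0 : 0 ≤ |y| := abs_nonneg y
    have hr0 : 0 < r := by rw [hr]; linarith
    have hr1 : r < 1 := by rw [hr]; linarith
    have hyr : |y| < r := by rw [hr]; linarith
    set g : ℕ → ℝ → ℝ := fun n z => poch b n / n.factorial * z ^ n with hg
    set g' : ℕ → ℝ → ℝ := fun n z => poch b n / n.factorial * (n * z ^ (n - 1)) with hg'
    set u : ℕ → ℝ := fun n => poch (|b| + 1) n / (n-1).factorial * r ^ (n-1) with hu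
    have hB : (0:ℝ) < |b| + 1 := by positivity
    have hu_sum : Summable u := by
      rw [← summable_nat_add_iff 1]
      exact (summable_shift hB hr0 hr1).congr fun n => by simp [hu]
    have hgderiv : ∀ (n : ℕ) (z : ℝ), z ∈ Metric.ball (0:ℝ) r → HasDerivAt (g n) (g' n z) z :=
      fun n z _ => (hasDerivAt_pow n z).const_mul _
    have hbound : ∀ (n : ℕ) (z : ℝ), z ∈ Metric.ball (0:ℝ) r → ‖g' n z‖ ≤ u n := by
      intro n z hz
      rw [Metric.mem_ball, dist_zero_right, Real.norm_eq_abs] at hz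
      rw [hg', hu, Real.norm_eq_abs]
      rcases n with _ | m
      · have h1 := (poch_pos hB 1).le
        simp only [hg', hu]
        simp only [Nat.cast_zero, zero_mul, mul_zero, abs_zero, poch_zero]
        positivity
      · simp only [hg', hu, Nat.add_sub_cancel]
        rw [abs_mul, abs_mul, abs_div, abs_pow]
        have h1 : |poch b (m+1)| ≤ poch (|b|+1) (m+1) := abs_poch_le hB (by linarith) _
        have h2 : |z| ^ m ≤ r ^ m := pow_le_pow_left₀ (abs_nonneg z) hz.le m
        have h3 : |((m+1 : ℕ) : ℝ)| = (m+1 : ℕ) := abs_of_nonneg (by positivity)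
        have hfac : ((m+1).factorial : ℝ) = (m+1 : ℕ) * m.factorial := by
          rw [Nat.factorial_succ]; push_cast; ring
        have hposf : (0:ℝ) < (m.factorial : ℝ) := by positivity
        have hposf1 : (0:ℝ) < ((m+1).factorial : ℝ) := by positivity
        have key : |poch b (m+1)| / ((m+1).factorial : ℝ) * |((m+1:ℕ):ℝ)| = |poch b (m+1)| / m.factorial := by
          rw [h3, hfac]
          field_simp
        calc |poch b (m+1)| / |(((m+1).factorial : ℕ) : ℝ)| * (|((m+1:ℕ):ℝ)| * |z| ^ m)
            = |poch b (m+1)| / ((m+1).factorial : ℝ) * |((m+1:ℕ):ℝ)| * |z| ^ m := by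
              rw [Nat.abs_cast]; ring
          _ = |poch b (m+1)| / m.factorial * |z| ^ m := by rw [key]
          _ ≤ poch (|b|+1) (m+1) / m.factorial * r ^ m := by
              apply mul_le_mul (by gcongr) h2 (by positivity)
              have := (poch_pos hB (m+1)).le; positivity
    have h0mem : (0:ℝ) ∈ Metric.ball (0:ℝ) r := by simp [hr0]
    have hymem : y ∈ Metric.ball (0:ℝ) r := by simpa [Real.norm_eq_abs] using hyr
    have hg0 : Summable fun n => g n 0 := by
      apply summable_of_finite_support
      apply Set.Finite.subset (Set.finite_singleton 0)
      intro n hn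
      rcases n with _ | m
      · simp
      · simp [hg] at hn
    have := hasDerivAt_tsum_of_isPreconnected hu_sum Metric.isOpen_ball
      (convex_ball (0:ℝ) r).isPreconnected hgderiv hbound h0mem hg0 hymem
    -- identify the derivative sum with D y
    have hDsum : HasSum (fun n => g' n y) (D y) := by
      have hsum : Summable fun n : ℕ => poch b (n+1) / n.factorial * y ^ n := summable_binD hy
      have hDs : HasSum (fun n : ℕ => poch b (n+1) / n.factorial * y ^ n) (D y) := hsum.hasSum
      have hshift : ∀ n : ℕ, g' (n + 1) y = poch b (n+1) / n.factorial * y ^ n := by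
        intro n
        simp only [hg', Nat.add_sub_cancel]
        rw [Nat.factorial_succ]
        push_cast
        have hposf : (0:ℝ) < (n.factorial : ℝ) := by positivity
        field_simp
      have h0 : g' 0 y = 0 := by simp [hg']
      have key : HasSum (fun n => g' (n+1) y) (D y - ∑ i ∈ Finset.range 1, g' i y) := by
        simp only [Finset.sum_range_one, h0, sub_zero]
        exact hDs.congr_fun fun n => hshift n
      exact (hasSum_nat_add_iff' 1).mp key
    rw [← hDsum.tsum_eq]
    exact this
  -- functional equation
  have hfun : ∀ y : ℝ, |y| < 1 → (1 - y) * D y = b * F y := by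
    intro y hy
    have hDs : HasSum (fun n : ℕ => poch b (n+1) / n.factorial * y ^ n) (D y) :=
      (summable_binD hy).hasSum
    have hFs : HasSum (fun n : ℕ => poch b n / n.factorial * y ^ n) (F y) :=
      (summable_bin hy).hasSum
    have hbF : HasSum (fun n : ℕ => b * (poch b n / n.factorial * y ^ n)) (b * F y) :=
      hFs.mul_left b
    set v : ℕ → ℝ := fun n => poch b (n+1) / n.factorial * y ^ n
      - b * (poch b n / n.factorial * y ^ n) with hv
    have hvsum : HasSum v (D y - b * F y) := hDs.sub hbF
    have hv0 : v 0 = 0 := by simp [hv, poch_zero, poch_succ]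
    have hvshift : ∀ n : ℕ, v (n + 1) = y * (poch b (n+1) / n.factorial * y ^ n) := by
      intro n
      simp only [hv, poch_succ]
      rw [Nat.factorial_succ]
      have hposf : (0:ℝ) < (n.factorial : ℝ) := by positivity
      push_cast
      field_simp
      ring
    have key : HasSum (fun n => v (n+1)) (y * D y - ∑ i ∈ Finset.range 1, v i) := by
      simp only [Finset.sum_range_one, hv0, sub_zero]
      exact (hDs.mul_left y).congr_fun fun n => hvshift n
    have h2 : HasSum v (y * D y) := (hasSum_nat_add_iff' 1).mp key
    have := hvsum.unique h2
    linarith [this]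
  -- constancy of F y * (1-y)^b
  have hG : ∀ y ∈ Metric.ball (0:ℝ) 1, HasDerivAt (fun t => F t * (1 - t) ^ b) 0 y := by
    intro y hy
    rw [Metric.mem_ball, dist_zero_right, Real.norm_eq_abs] at hy
    have h1y : 0 < 1 - y := by
      rcases abs_lt.mp hy with ⟨_, h⟩; linarith
    have hlin : HasDerivAt (fun t : ℝ => 1 - t) (-1) y := by
      simpa using (hasDerivAt_id y).const_sub 1
    have hrpow : HasDerivAt (fun t : ℝ => (1 - t) ^ b) (b * (1 - y) ^ (b - 1) * (-1)) y := by
      exact (Real.hasDerivAt_rpow_const (Or.inl h1y.ne')).comp y hlin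
    have hmul := (hderiv y hy).mul hrpow
    have hzero : D y * (1 - y) ^ b + F y * (b * (1 - y) ^ (b - 1) * (-1)) = 0 := by
      have hsplit : (1 - y) ^ b = (1 - y) ^ (b - 1) * (1 - y) := by
        rw [← Real.rpow_add_one h1y.ne' (b-1), sub_add_cancel]
      rw [hsplit]
      calc D y * ((1 - y) ^ (b - 1) * (1 - y)) + F y * (b * (1 - y) ^ (b - 1) * (-1))
          = (1 - y) ^ (b - 1) * ((1 - y) * D y - b * F y) := by ring
        _ = 0 := by rw [hfun y hy]; ring
    rw [hzero] at hmul
    exact hmul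
  have hconst : ∀ y ∈ Metric.ball (0:ℝ) 1, F y * (1 - y) ^ b = F 0 * (1 - 0) ^ b := by
    intro y hy
    have hdiff : DifferentiableOn ℝ (fun t => F t * (1 - t) ^ b) (Metric.ball (0:ℝ) 1) :=
      fun t ht => ((hG t ht).differentiableAt).differentiableWithinAt
    refine (convex_ball (0:ℝ) 1).is_const_of_fderivWithin_eq_zero hdiff ?_ hy (by simp)
    intro t ht
    rw [fderivWithin_of_isOpen Metric.isOpen_ball ht]
    have := (hG t ht).hasFDerivAt
    rw [this.fderiv]
    ext
    simp
  have hF0 : F 0 = 1 := by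
    show (∑' n : ℕ, poch b n / n.factorial * (0:ℝ) ^ n) = 1
    rw [tsum_eq_single 0 (fun n hn => by
      rcases n with _ | m
      · exact absurd rfl hn
      · simp)]
    simp [poch_zero]
  have hx' := hconst x (by simpa [Real.norm_eq_abs] using hx)
  rw [hF0, one_mul, sub_zero, Real.one_rpow] at hx'
  have h1x : 0 < 1 - x := by rcases abs_lt.mp hx with ⟨_, h⟩; linarith
  show F x = (1 - x) ^ (-b)
  rw [Real.rpow_neg h1x.le]
  exact eq_inv_of_mul_eq_one_left hx'

lemma coe_beta_integrand {u v : ℝ} {t : ℝ} (ht0 : 0 ≤ t) (ht1 : t ≤ 1) :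
    ((t ^ (u - 1) * (1 - t) ^ (v - 1) : ℝ) : ℂ)
      = (t : ℂ) ^ ((u:ℂ) - 1) * (1 - (t:ℂ)) ^ ((v:ℂ) - 1) := by
  have h1 : ((t ^ (u - 1) : ℝ) : ℂ) = (t : ℂ) ^ ((u:ℂ) - 1) := by
    rw [Complex.ofReal_cpow ht0]
    push_cast
    ring_nf
  have h2 : (((1 - t) ^ (v - 1) : ℝ) : ℂ) = (1 - (t : ℂ)) ^ ((v:ℂ) - 1) := by
    rw [Complex.ofReal_cpow (by linarith)]
    push_cast
    ring_nf
  push_cast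
  rw [← h1, ← h2]

lemma real_beta_integral {u v : ℝ} (hu : 0 < u) (hv : 0 < v) :
    (∫ t in (0:ℝ)..1, t ^ (u - 1) * (1 - t) ^ (v - 1)) = eulerBeta u v := by
  have hBc : Complex.betaIntegral u v
      = ((∫ t in (0:ℝ)..1, t ^ (u - 1) * (1 - t) ^ (v - 1) : ℝ) : ℂ) := by
    rw [Complex.betaIntegral, ← intervalIntegral.integral_ofReal]
    refine intervalIntegral.integral_congr fun t ht => ?_
    rw [Set.uIcc_of_le (by norm_num : (0:ℝ) ≤ 1)] at ht
    exact (coe_beta_integrand ht.1 ht.2).symm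
  have hG := Complex.Gamma_mul_Gamma_eq_betaIntegral
    (by simpa using hu : 0 < Complex.re u) (by simpa using hv : 0 < Complex.re v)
  have hGuv : Complex.Gamma ((u:ℂ) + v) ≠ 0 := by
    rw [show ((u:ℂ) + v) = ((u + v : ℝ) : ℂ) by push_cast; ring, Complex.Gamma_ofReal]
    exact_mod_cast (Real.Gamma_pos_of_pos (by linarith)).ne'
  rw [show ((u:ℂ) + v) = ((u + v : ℝ) : ℂ) by push_cast; ring, Complex.Gamma_ofReal,
    Complex.Gamma_ofReal, Complex.Gamma_ofReal, hBc] at hG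
  have hreal : Real.Gamma u * Real.Gamma v
      = Real.Gamma (u + v) * ∫ t in (0:ℝ)..1, t ^ (u - 1) * (1 - t) ^ (v - 1) := by
    exact_mod_cast hG
  have h2 : Real.Gamma (u + v) ≠ 0 := (Real.Gamma_pos_of_pos (by linarith)).ne'
  rw [eulerBeta]
  field_simp
  rw [hreal]
  ring

lemma Gamma_add_nat {x : ℝ} (hx : 0 < x) (n : ℕ) :
    Real.Gamma (x + n) = poch x n * Real.Gamma x := by
  induction n with
  | zero => simp [poch_zero]
  | succ n ih =>
    have hxn : x + n ≠ 0 := by positivity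
    rw [show x + ((n:ℕ)+1:ℕ) = (x + n) + 1 by push_cast; ring,
      Real.Gamma_add_one hxn, ih, poch_succ]
    ring

lemma eulerBeta_shift {a c : ℝ} (ha : 0 < a) (hc : a < c) (n : ℕ) :
    eulerBeta (a + n) (c - a) = poch a n / poch c n * eulerBeta a (c - a) := by
  have hc0 : 0 < c := lt_trans ha hc
  have h1 : a + n + (c - a) = c + n := by ring
  rw [eulerBeta, eulerBeta, h1, Gamma_add_nat ha, Gamma_add_nat hc0]
  have h2 : Real.Gamma c ≠ 0 := (Real.Gamma_pos_of_pos hc0).ne'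
  have h3 : poch c n ≠ 0 := (poch_pos hc0 n).ne'
  rw [show a + (c - a) = c by ring]
  field_simp

lemma beta_integrand_integrableOn {u v : ℝ} (hu : 0 < u) (hv : 0 < v) :
    IntegrableOn (fun t : ℝ => t ^ (u - 1) * (1 - t) ^ (v - 1)) (Set.Ioc 0 1) := by
  have hc := Complex.betaIntegral_convergent (u := u) (v := v) (by simpa using hu) (by simpa using hv)
  rw [intervalIntegrable_iff_integrableOn_Ioc_of_le (by norm_num : (0:ℝ) ≤ 1)] at hc
  have hre : IntegrableOn (fun t : ℝ => ((t : ℂ) ^ ((u:ℂ) - 1) * (1 - (t:ℂ)) ^ ((v:ℂ) - 1)).re)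
      (Set.Ioc 0 1) := hc.re
  refine hre.congr_fun (fun t ht => ?_) measurableSet_Ioc
  dsimp only
  rw [← coe_beta_integrand ht.1.le ht.2, Complex.ofReal_re]

lemma eulerBeta_pos {u v : ℝ} (hu : 0 < u) (hv : 0 < v) : 0 < eulerBeta u v := by
  have h1 := Real.Gamma_pos_of_pos hu
  have h2 := Real.Gamma_pos_of_pos hv
  have h3 := Real.Gamma_pos_of_pos (by linarith : 0 < u + v)
  rw [eulerBeta]; positivity

theorem euler_integral_repr
    (a b c z : ℝ) (ha : 0 < a) (hca : a < c) (hz1 : z < 1) (hz : |z| < 1) :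
    (∫ t in (0:ℝ)..1, t ^ (a - 1) * (1 - t) ^ (c - a - 1) * (1 - t * z) ^ (-b))
      = eulerBeta a (c - a) * hyp2F1 a b c z := by
  have hv : 0 < c - a := by linarith
  set B := eulerBeta a (c - a) with hB
  have hBpos : 0 < B := eulerBeta_pos ha hv
  set coef : ℕ → ℝ := fun n => poch b n / n.factorial * z ^ n with hcoef
  set G : ℕ → ℝ → ℝ := fun n t => coef n * (t ^ (a + n - 1) * (1 - t) ^ (c - a - 1)) with hG
  -- pointwise expansion on Ioc
  have hexp : ∀ t ∈ Set.Ioc (0:ℝ) 1,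
      t ^ (a - 1) * (1 - t) ^ (c - a - 1) * (1 - t * z) ^ (-b) = ∑' n : ℕ, G n t := by
    intro t ht
    obtain ⟨ht0, ht1⟩ := ht
    have htz : |t * z| < 1 := by
      rw [abs_mul, abs_of_pos ht0]
      calc t * |z| ≤ 1 * |z| := by
            apply mul_le_mul_of_nonneg_right ht1 (abs_nonneg z)
        _ < 1 := by rwa [one_mul]
    rw [← binomial_series htz, ← tsum_mul_left]
    refine tsum_congr fun n => ?_
    have hpow : t ^ (a + n - 1) = t ^ (a - 1) * t ^ (n : ℕ) := by
      rw [← Real.rpow_natCast t n, ← Real.rpow_add ht0]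
      ring_nf
    simp only [hG, hcoef]
    rw [hpow, mul_pow]
    ring
  -- integrability of each term
  have hint : ∀ n : ℕ, IntegrableOn (G n) (Set.Ioc 0 1) := by
    intro n
    have h : IntegrableOn (fun t : ℝ => (a + (n:ℝ) - 1) * 0 + coef n * (t ^ (a + (n:ℝ) - 1) * (1 - t) ^ (c - a - 1)))
        (Set.Ioc 0 1) := by
      simp only [mul_zero, zero_add]
      exact (beta_integrand_integrableOn (u := a + n) (v := c - a)
        (by positivity) hv).const_mul (coef n)
    simpa using h
  -- value of each integral
  have hval : ∀ n : ℕ, (∫ t in Set.Ioc (0:ℝ) 1, G n t)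
      = coef n * (poch a n / poch c n * B) := by
    intro n
    show (∫ t in Set.Ioc (0:ℝ) 1, coef n * (t ^ (a + (n:ℝ) - 1) * (1 - t) ^ (c - a - 1))) = _
    rw [MeasureTheory.integral_const_mul]
    rw [← intervalIntegral.integral_of_le (by norm_num : (0:ℝ) ≤ 1)]
    rw [show a + (n:ℝ) - 1 = (a + n) - 1 by ring]
    rw [real_beta_integral (by positivity) hv, eulerBeta_shift ha hca]
  -- norm integrals
  have hnorm : ∀ n : ℕ, (∫ t in Set.Ioc (0:ℝ) 1, ‖G n t‖)
      = |coef n| * (poch a n / poch c n * B) := by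
    intro n
    have h1 : ∀ t ∈ Set.Ioc (0:ℝ) 1, ‖G n t‖
        = |coef n| * (t ^ (a + n - 1) * (1 - t) ^ (c - a - 1)) := by
      intro t ht
      obtain ⟨ht0, ht1⟩ := ht
      have e1 := Real.rpow_nonneg ht0.le (a + n - 1)
      have e2 := Real.rpow_nonneg (by linarith : (0:ℝ) ≤ 1 - t) (c - a - 1)
      rw [hG, norm_mul, Real.norm_eq_abs, Real.norm_eq_abs,
        abs_of_nonneg (by positivity : (0:ℝ) ≤ t ^ (a + (n:ℝ) - 1) * (1 - t) ^ (c - a - 1))]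
    rw [MeasureTheory.setIntegral_congr_fun measurableSet_Ioc h1,
      MeasureTheory.integral_const_mul,
      ← intervalIntegral.integral_of_le (by norm_num : (0:ℝ) ≤ 1),
      show a + (n:ℝ) - 1 = (a + n) - 1 by ring,
      real_beta_integral (by positivity) hv, eulerBeta_shift ha hca]
  -- summability of norm integrals
  have hsum : Summable fun n : ℕ => ∫ t in Set.Ioc (0:ℝ) 1, ‖G n t‖ := by
    set r := (|z| + 1) / 2 with hr
    have hz0 : 0 ≤ |z| := abs_nonneg z
    have hr0 : 0 < r := by rw [hr]; linarith
    have hr1 : r < 1 := by rw [hr]; linarith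
    have hzr : |z| ≤ r := by rw [hr]; linarith
    have hb1 : (0:ℝ) < |b| + 1 := by positivity
    have hm := (summable_master (A := a) (B := |b| + 1) (C := c) ha hb1
      (lt_trans ha hca) hr0 hr1).mul_left B
    refine hm.of_nonneg_of_le (fun n => ?_) (fun n => ?_)
    · rw [hnorm n]
      have h1 := (poch_pos ha n).le
      have h2 := (poch_pos (lt_trans ha hca) n).le
      positivity
    · rw [hnorm n, hcoef]
      have hpa := poch_pos ha n
      have hpc := poch_pos (lt_trans ha hca) n
      have h1 : |poch b n / n.factorial * z ^ n| ≤ poch (|b|+1) n / n.factorial * r ^ n := by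
        rw [abs_mul, abs_div, abs_pow, Nat.abs_cast]
        apply mul_le_mul (by gcongr; exact abs_poch_le hb1 (by linarith) n)
          (by
            calc |z| ^ n ≤ r ^ n := pow_le_pow_left₀ (abs_nonneg z) hzr n
              _ = r ^ n := rfl)
          (by positivity)
        have := (poch_pos hb1 n).le; positivity
      calc |poch b n / n.factorial * z ^ n| * (poch a n / poch c n * B)
          ≤ poch (|b|+1) n / n.factorial * r ^ n * (poch a n / poch c n * B) := by
            apply mul_le_mul_of_nonneg_right h1 (by positivity)
        _ = B * (poch a n * poch (|b|+1) n / (poch c n * n.factorial) * r ^ n) := by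
            field_simp
  -- put it together
  rw [intervalIntegral.integral_of_le (by norm_num : (0:ℝ) ≤ 1)]
  rw [MeasureTheory.setIntegral_congr_fun measurableSet_Ioc hexp]
  rw [← MeasureTheory.integral_tsum_of_summable_integral_norm hint hsum]
  rw [show (∑' n, ∫ t in Set.Ioc (0:ℝ) 1, G n t) = ∑' n, coef n * (poch a n / poch c n * B) from
    tsum_congr hval]
  rw [hyp2F1, ← tsum_mul_left]
  refine tsum_congr fun n => ?_
  rw [hcoef]
  have hpc := (poch_pos (lt_trans ha hca) n).ne'
  have hfac : ((n.factorial : ℕ) : ℝ) ≠ 0 := by positivity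
  field_simp
end
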